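/- Let k be a field and let ℙ¹(k) denote the projectivization of the plane k². Consider the diagonal action of GL_2(k) on the set Ω of 4-tuples (ℓ_1, ℓ_2, ℓ_3, ℓ_4) of pairwise distinct points of ℙ¹(k). Then the map sending α ∈ k∖{0,1} to the GL_2(k)-orbit of the tuple ([1:0], [0:1], [1:1], [α:1]) is a bijection from k∖{0,1} onto the set of GL_2(k)-orbits in Ω. -/

import Mathlib

open scoped LinearAlgebra.Projectivization

noncomputable section

/-- The projective line `ℙ¹(k)`, i.e. the projectivization of `k²`. -/
abbrev ProjLine (k : Type) [Field k] := ℙ k (Fin 2 → k)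

/-- The point `[a:b]` of `ℙ¹(k)`, for `(a,b) ≠ 0`. -/
def pt (k : Type) [Field k] (a b : k) (h : ![a, b] ≠ 0) : ProjLine k :=
  Projectivization.mk k ![a, b] h

/-- Two `4`-tuples of points in `ℙ¹(k)` lie in the same orbit of the (diagonal)
action of `GL₂(k)` iff some linear automorphism of `k²` carries one to the other. -/
def sameOrbit (k : Type) [Field k] (t t' : Fin 4 → ProjLine k) : Prop :=
  ∃ g : (Fin 2 → k) ≃ₗ[k] (Fin 2 → k),
    ∀ i, Projectivization.map g.toLinearMap g.injective (t i) = t' i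

/-- The standard tuple `([1:0], [0:1], [1:1], [α:1])`. -/
def stdTuple (k : Type) [Field k] (α : k) : Fin 4 → ProjLine k :=
  ![pt k 1 0 (fun h => one_ne_zero (congrFun h 0)),
    pt k 0 1 (fun h => one_ne_zero (congrFun h 1)),
    pt k 1 1 (fun h => one_ne_zero (congrFun h 0)),
    pt k α 1 (fun h => one_ne_zero (congrFun h 1))]

section aux

variable {k : Type} [Field k]

lemma map_refl_aux (p : ProjLine k) :
    Projectivization.map (LinearEquiv.refl k (Fin 2 → k)).toLinearMap
      (LinearEquiv.refl k (Fin 2 → k)).injective p = p := by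
  induction p using Projectivization.ind with
  | h v hv => rfl

lemma map_map_aux (g h : (Fin 2 → k) ≃ₗ[k] (Fin 2 → k)) (p : ProjLine k) :
    Projectivization.map h.toLinearMap h.injective
      (Projectivization.map g.toLinearMap g.injective p) =
    Projectivization.map (g ≪≫ₗ h).toLinearMap (g ≪≫ₗ h).injective p := by
  induction p using Projectivization.ind with
  | h v hv => rfl

lemma map_congr_aux (g h : (Fin 2 → k) ≃ₗ[k] (Fin 2 → k)) (hgh : g = h) (p : ProjLine k) :
    Projectivization.map g.toLinearMap g.injective p =
    Projectivization.map h.toLinearMap h.injective p := by subst hgh; rfl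

lemma sameOrbit_equivalence : Equivalence (sameOrbit k) where
  refl t := ⟨LinearEquiv.refl k _, fun i => map_refl_aux _⟩
  symm {t t'} := by
    rintro ⟨g, hg⟩
    refine ⟨g.symm, fun i => ?_⟩
    rw [← hg i, map_map_aux, map_congr_aux _ (LinearEquiv.refl k _)
      (LinearEquiv.self_trans_symm g), map_refl_aux]
  trans {t t' t''} := by
    rintro ⟨g, hg⟩ ⟨h, hh⟩
    refine ⟨g ≪≫ₗ h, fun i => ?_⟩
    rw [← map_map_aux, hg, hh]

lemma pt_ne {a b c d : k} (ha : ![a, b] ≠ 0) (hc : ![c, d] ≠ 0) (h : a * d ≠ b * c) :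
    pt k a b ha ≠ pt k c d hc := by
  intro he
  rw [pt, pt, Projectivization.mk_eq_mk_iff'] at he
  obtain ⟨s, hs⟩ := he
  have h0 := congrFun hs 0
  have h1 := congrFun hs 1
  simp only [Pi.smul_apply, Matrix.cons_val_zero, Matrix.cons_val_one, Matrix.head_cons,
    smul_eq_mul] at h0 h1
  apply h
  rw [← h0, ← h1]; ring

lemma stdTuple_injective {α : k} (h0 : α ≠ 0) (h1 : α ≠ 1) :
    Function.Injective (stdTuple k α) := by
  intro i j hij
  fin_cases i <;> fin_cases j <;> simp only [stdTuple, Fin.isValue, Matrix.cons_val_zero,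
    Matrix.cons_val_one, Matrix.head_cons, Matrix.cons_val_two, Matrix.tail_cons,
    Matrix.cons_val_three] at hij <;> first
    | rfl
    | exact absurd hij (pt_ne _ _ (by simp [eq_comm, h0, h1]))

lemma std_injOn {α β : k} (hα : α ≠ 0 ∧ α ≠ 1)
    (h : sameOrbit k (stdTuple k α) (stdTuple k β)) : α = β := by
  obtain ⟨g, hg⟩ := h
  have e10 : (![(1:k), 0] : Fin 2 → k) ≠ 0 := fun h => one_ne_zero (congrFun h 0)
  have e01 : (![(0:k), 1] : Fin 2 → k) ≠ 0 := fun h => one_ne_zero (congrFun h 1)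
  have e11 : (![(1:k), 1] : Fin 2 → k) ≠ 0 := fun h => one_ne_zero (congrFun h 0)
  have eα1 : (![α, 1] : Fin 2 → k) ≠ 0 := fun h => one_ne_zero (congrFun h 1)
  have eβ1 : (![β, 1] : Fin 2 → k) ≠ 0 := fun h => one_ne_zero (congrFun h 1)
  have h0 := hg 0
  have h1 := hg 1
  have h2 := hg 2
  have h3 := hg 3
  simp only [stdTuple, pt, Fin.isValue, Matrix.cons_val_zero, Matrix.cons_val_one,
    Matrix.head_cons, Matrix.cons_val_two, Matrix.tail_cons, Matrix.cons_val_three,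
    Projectivization.map_mk, Projectivization.mk_eq_mk_iff', LinearEquiv.coe_coe]
    at h0 h1 h2 h3
  obtain ⟨c, hc⟩ := h0
  obtain ⟨d, hd⟩ := h1
  obtain ⟨u, hu⟩ := h2
  obtain ⟨w, hw⟩ := h3
  -- hc : c • ![1,0] = g ![1,0], etc.
  have hsplit11 : (![(1:k), 1] : Fin 2 → k) = ![1, 0] + ![0, 1] := by
    funext i; fin_cases i <;> simp
  have hsplitα : (![α, 1] : Fin 2 → k) = α • ![1, 0] + ![0, 1] := by
    funext i; fin_cases i <;> simp
  have hg11 : g ![(1:k), 1] = c • ![1, 0] + d • ![0, 1] := by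
    rw [hsplit11, map_add, ← hc, ← hd]
  have hgα : g ![α, 1] = (α * c) • ![1, 0] + d • ![0, 1] := by
    rw [hsplitα, map_add, map_smul, ← hc, ← hd, smul_smul]
  have hu' := hu.trans hg11
  have hw' := hw.trans hgα
  have hu0 := congrFun hu' 0
  have hu1 := congrFun hu' 1
  have hw0 := congrFun hw' 0
  have hw1 := congrFun hw' 1
  simp only [Pi.smul_apply, Pi.add_apply, Matrix.cons_val_zero, Matrix.cons_val_one,
    Matrix.head_cons, smul_eq_mul, mul_one, mul_zero, add_zero, zero_add] at hu0 hu1 hw0 hw1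
  -- hu0 : u = c, hu1 : u = d, hw0 : w * β = α * c, hw1 : w = d
  have hcne : c ≠ 0 := by
    intro h
    apply e10
    apply g.injective
    rw [← hc, h, zero_smul, map_zero]
  have hwc : w = c := by rw [hw1, ← hu1, hu0]
  have hcβ : c * β = c * α := by rw [mul_comm c α, ← hw0, hwc]
  exact (mul_left_cancel₀ hcne hcβ).symm

end aux

section surj

variable {k : Type} [Field k]

lemma exists_std (t : Fin 4 → ProjLine k) (ht : Function.Injective t) :
    ∃ α : k, (α ≠ 0 ∧ α ≠ 1) ∧ sameOrbit k (stdTuple k α) t := by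
  classical
  set v : Fin 4 → (Fin 2 → k) := fun i => (t i).rep with hvdef
  have hvne : ∀ i, v i ≠ 0 := fun i => Projectivization.rep_nonzero _
  have hmk : ∀ i, Projectivization.mk k (v i) (hvne i) = t i := fun i =>
    Projectivization.mk_rep _
  have eqpt : ∀ (i j : Fin 4) (s : k), v i = s • v j → t i = t j := by
    intro i j s h
    rw [← hmk i, ← hmk j]
    exact (Projectivization.mk_eq_mk_iff' k _ _ _ _).2 ⟨s, h.symm⟩
  have hind : LinearIndependent k ![v 0, v 1] := by
    have hne : t 0 ≠ t 1 := fun h => by simpa using ht h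
    have h := (Projectivization.independent_pair_iff_ne (t 0) (t 1)).2 hne
    rw [Projectivization.independent_iff] at h
    convert h using 1
    funext i; fin_cases i <;> rfl
    rfl
  let B : Module.Basis (Fin 2) k (Fin 2 → k) :=
    basisOfLinearIndependentOfCardEqFinrank hind (by simp)
  have hB : ∀ i, B i = ![v 0, v 1] i := fun i =>
    congrFun (coe_basisOfLinearIndependentOfCardEqFinrank hind (by simp)) i
  have hrepr : ∀ w : Fin 2 → k, w = B.repr w 0 • v 0 + B.repr w 1 • v 1 := by
    intro w
    have h := B.sum_repr w
    rw [Fin.sum_univ_two, hB 0, hB 1] at h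
    simpa using h.symm
  set a := B.repr (v 2) 0 with hadef
  set c := B.repr (v 2) 1 with hcdef
  set x := B.repr (v 3) 0 with hxdef
  set y := B.repr (v 3) 1 with hydef
  have hv2 := hrepr (v 2)
  have hv3 := hrepr (v 3)
  rw [← hadef, ← hcdef] at hv2
  rw [← hxdef, ← hydef] at hv3
  have ha : a ≠ 0 := by
    intro h
    rw [h, zero_smul, zero_add] at hv2
    exact (by decide : (2 : Fin 4) ≠ 1) (ht (eqpt 2 1 c hv2))
  have hc : c ≠ 0 := by
    intro h
    rw [h, zero_smul, add_zero] at hv2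
    exact (by decide : (2 : Fin 4) ≠ 0) (ht (eqpt 2 0 a hv2))
  have hx : x ≠ 0 := by
    intro h
    rw [h, zero_smul, zero_add] at hv3
    exact (by decide : (3 : Fin 4) ≠ 1) (ht (eqpt 3 1 y hv3))
  have hy : y ≠ 0 := by
    intro h
    rw [h, zero_smul, add_zero] at hv3
    exact (by decide : (3 : Fin 4) ≠ 0) (ht (eqpt 3 0 x hv3))
  have hind2 : LinearIndependent k ![a • v 0, c • v 1] := by
    have h := hind.units_smul ![Units.mk0 a ha, Units.mk0 c hc]
    convert h using 1
    funext i; fin_cases i <;> simp [Units.smul_def]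
  let B' : Module.Basis (Fin 2) k (Fin 2 → k) :=
    basisOfLinearIndependentOfCardEqFinrank hind2 (by simp)
  have hB' : ∀ i, B' i = ![a • v 0, c • v 1] i := fun i =>
    congrFun (coe_basisOfLinearIndependentOfCardEqFinrank hind2 (by simp)) i
  let g : (Fin 2 → k) ≃ₗ[k] (Fin 2 → k) :=
    (Pi.basisFun k (Fin 2)).equiv B' (Equiv.refl _)
  have hgapp : ∀ p q : k, g ![p, q] = (p * a) • v 0 + (q * c) • v 1 := by
    intro p q
    have hpq : (![p, q] : Fin 2 → k)
        = p • (Pi.basisFun k (Fin 2)) 0 + q • (Pi.basisFun k (Fin 2)) 1 := by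
      funext i; fin_cases i <;> simp [Pi.single_apply]
    rw [hpq, map_add, map_smul, map_smul, Module.Basis.equiv_apply, Module.Basis.equiv_apply]
    rw [Equiv.refl_apply, Equiv.refl_apply, hB' 0, hB' 1]
    simp [smul_smul]
  refine ⟨(c * x) / (a * y), ⟨?_, ?_⟩, g, ?_⟩
  · exact div_ne_zero (mul_ne_zero hc hx) (mul_ne_zero ha hy)
  · intro h
    rw [div_eq_one_iff_eq (mul_ne_zero ha hy)] at h
    have : v 3 = (y / c) • v 2 := by
      have h1 : x = (y / c) * a := by field_simp; linear_combination h
      have h2 : y = (y / c) * c := by field_simp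
      rw [hv3, hv2, smul_add, smul_smul, smul_smul, ← h1, ← h2]
    exact (by decide : (3 : Fin 4) ≠ 2) (ht (eqpt 3 2 _ this))
  · intro i
    fin_cases i <;>
      simp only [stdTuple, pt, Fin.isValue, Matrix.cons_val_zero, Matrix.cons_val_one,
        Matrix.head_cons, Matrix.cons_val_two, Matrix.tail_cons, Matrix.cons_val_three,
        Projectivization.map_mk] <;>
      rw [← hmk] <;>
      refine (Projectivization.mk_eq_mk_iff' k _ _ _ _).2 ?_
    · refine ⟨a, ?_⟩
      show a • v 0 = g ![(1:k), 0]
      rw [hgapp]; simp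
    · refine ⟨c, ?_⟩
      show c • v 1 = g ![(0:k), 1]
      rw [hgapp]; simp
    · refine ⟨1, ?_⟩
      show (1:k) • v 2 = g ![(1:k), 1]
      rw [hgapp, one_smul, one_mul, one_mul, ← hv2]
    · refine ⟨c / y, ?_⟩
      show (c / y) • v 3 = g ![(c * x) / (a * y), 1]
      have h1 : (c / y) * x = ((c * x) / (a * y)) * a := by field_simp
      have h2 : (c / y) * y = 1 * c := by field_simp
      rw [hgapp, hv3, smul_add, smul_smul, smul_smul, h1, h2]

end surj

/-- The map sending `α ∈ k∖{0,1}` to the `GL₂(k)`-orbit of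
`([1:0], [0:1], [1:1], [α:1])` is a bijection from `k∖{0,1}` onto the set of
`GL₂(k)`-orbits of `4`-tuples of pairwise distinct points of `ℙ¹(k)`. -/
theorem orbits_of_distinct_quadruples (k : Type) [Field k] :
    Set.BijOn (fun α : k => Quot.mk (sameOrbit k) (stdTuple k α))
      {α : k | α ≠ 0 ∧ α ≠ 1}
      {q : Quot (sameOrbit k) |
        ∃ t : Fin 4 → ProjLine k, Function.Injective t ∧ Quot.mk (sameOrbit k) t = q} := by
  refine ⟨?_, ?_, ?_⟩
  · intro α hα
    exact ⟨stdTuple k α, stdTuple_injective hα.1 hα.2, rfl⟩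
  · intro α hα β hβ h
    have h' : sameOrbit k (stdTuple k α) (stdTuple k β) :=
      (sameOrbit_equivalence.eqvGen_iff).1 (Quot.eq.1 h)
    exact std_injOn hα h'
  · rintro q ⟨t, ht, rfl⟩
    obtain ⟨α, hα, horb⟩ := exists_std t ht
    exact ⟨α, hα, (Quot.sound horb)⟩

end
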